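/- Let A : ℝ → ℝ be continuously differentiable with A(x) ≤ −a₀ for some a₀ > 0 and all x ∈ ℝ, with ∫_ℝ (1 + |t|)·|A′(t)| dt < ∞, and let r₀ : ℝ → ℝ be a bounded differentiable function with r₀ > 0 solving r₀′(x) = A(x)/r₀(x) + 1 on ℝ. Then: (i) for every t ∈ ℝ, every differentiable solution r of r′(x) = A(x)/r(x) + 1 with r(t) > r₀(t) remains positive, is defined on [t, ∞), and satisfies r(x) → +∞ as x → +∞; (ii) every differentiable solution r with 0 < r(t) < r₀(t) cannot remain positive for all x ≥ t, i.e. there is x₀⁽⁰⁾ > t with r(x) → 0 as x → x₀⁽⁰⁾. -/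

import Mathlib

open MeasureTheory Filter

/-- First-crossing ("fence") lemma: if `f t > c` and at every contact point
`f x = c` the derivative is strictly positive, then `f > c` on `[t, ∞)`. -/
lemma fence_lemma {t c : ℝ} {f F : ℝ → ℝ}
    (hf : ∀ x ∈ Set.Ici t, HasDerivWithinAt f (F x) (Set.Ici t) x)
    (h0 : c < f t)
    (hF : ∀ x ∈ Set.Ici t, f x = c → 0 < F x) :
    ∀ x ∈ Set.Ici t, c < f x := by
  by_contra h
  push_neg at h
  obtain ⟨b, hb, hfb⟩ := h
  have hcont : ContinuousOn f (Set.Ici t) := fun x hx => (hf x hx).continuousWithinAt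
  set S : Set ℝ := Set.Ici t ∩ f ⁻¹' Set.Iic c with hSdef
  have hSc : IsClosed S := hcont.preimage_isClosed_of_isClosed isClosed_Ici isClosed_Iic
  have hne : S.Nonempty := ⟨b, hb, hfb⟩
  have hbdd : BddBelow S := ⟨t, fun x hx => hx.1⟩
  set s := sInf S with hs
  have hsS : s ∈ S := hSc.csInf_mem hne hbdd
  have hst : t ≤ s := hsS.1
  have hlt : ∀ x, t ≤ x → x < s → c < f x := by
    intro x hx hxs
    by_contra hx2; push_neg at hx2
    exact absurd (csInf_le hbdd ⟨hx, hx2⟩) (not_le.2 hxs)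
  have hts : t < s := by
    rcases eq_or_lt_of_le hst with h | h
    · exact absurd hsS.2 (not_le.2 (h ▸ h0))
    · exact h
  have hnebot : (nhdsWithin s (Set.Iio s)).NeBot := by infer_instance
  have hfs_ge : c ≤ f s := by
    have htend : Tendsto f (nhdsWithin s (Set.Ioo t s)) (nhds (f s)) :=
      ((hcont s hsS.1).tendsto).mono_left
        (nhdsWithin_mono s (fun x hx => le_of_lt hx.1))
    have hne' : (nhdsWithin s (Set.Ioo t s)).NeBot := by
      rw [nhdsWithin_Ioo_eq_nhdsLT hts]; exact hnebot
    refine ge_of_tendsto htend ?_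
    filter_upwards [self_mem_nhdsWithin] with x hx
    exact le_of_lt (hlt x (le_of_lt hx.1) hx.2)
  have hfs : f s = c := le_antisymm hsS.2 hfs_ge
  have hders : HasDerivAt f (F s) s := (hf s hsS.1).hasDerivAt (Ici_mem_nhds hts)
  have hFpos := hF s hsS.1 hfs
  have hslope : Tendsto (slope f s) (nhdsWithin s {s}ᶜ) (nhds (F s)) :=
    hasDerivAt_iff_tendsto_slope.1 hders
  have h1 : ∀ᶠ x in nhdsWithin s (Set.Iio s), 0 < slope f s x :=
    (hslope.mono_left (nhdsWithin_mono s (fun x hx => ne_of_lt hx))).eventually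
      (eventually_gt_nhds hFpos)
  have h2 : ∀ᶠ x in nhdsWithin s (Set.Iio s), t < x :=
    eventually_nhdsWithin_of_eventually_nhds (eventually_gt_nhds hts)
  obtain ⟨x, hx1, hx2, hx3⟩ := (h1.and (h2.and self_mem_nhdsWithin)).exists
  have hx3' : x < s := hx3
  have hxval : c < f x := hlt x (le_of_lt hx2) hx3'
  have hslope_val : slope f s x = (f x - f s) / (x - s) := by
    simp [slope, div_eq_inv_mul]
  rw [hslope_val] at hx1
  rcases div_pos_iff.1 hx1 with ⟨_, h'⟩ | ⟨h', _⟩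
  · linarith
  · rw [hfs] at h'; linarith

/-- Linear growth lemma: if `f' ≥ ε` on `[t, ∞)` then `f x ≥ f t + ε (x - t)`. -/
lemma growth_lemma {t ε : ℝ} {f F : ℝ → ℝ}
    (hf : ∀ x ∈ Set.Ici t, HasDerivWithinAt f (F x) (Set.Ici t) x)
    (hε : ∀ x ∈ Set.Ici t, ε ≤ F x) :
    ∀ x ∈ Set.Ici t, f t + ε * (x - t) ≤ f x := by
  set g : ℝ → ℝ := fun x => f x - ε * x with hg
  have key : ∀ x ∈ interior (Set.Ici t), HasDerivAt g (F x - ε) x := by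
    intro x hx
    rw [interior_Ici] at hx
    have hda : HasDerivAt f (F x) x :=
      (hf x (Set.mem_Ici.2 (le_of_lt hx))).hasDerivAt (Ici_mem_nhds hx)
    have hlin : HasDerivAt (fun y => ε * y) ε x := by
      simpa using (hasDerivAt_id x).const_mul ε
    exact hda.sub hlin
  have hmono : MonotoneOn g (Set.Ici t) := by
    apply monotoneOn_of_deriv_nonneg (convex_Ici t)
    · exact ContinuousOn.sub (fun x hx => (hf x hx).continuousWithinAt)
        ((continuous_const.mul continuous_id).continuousOn)
    · exact fun x hx => (key x hx).differentiableAt.differentiableWithinAt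
    · intro x hx
      rw [(key x hx).deriv]
      have hx' : x ∈ Set.Ici t := Set.mem_Ici.2 (le_of_lt (by rwa [interior_Ici] at hx))
      linarith [hε x hx']
  intro x hx
  have := hmono (Set.self_mem_Ici (a := t)) hx hx
  simp only [hg] at this
  linarith

/-- A `C¹` function with integrable derivative is bounded. -/
lemma bound_of_integrable_deriv {A : ℝ → ℝ} (hA : ContDiff ℝ 1 A)
    (hint : Integrable (fun t => (1 + |t|) * |deriv A t|)) :
    ∃ B : ℝ, 1 ≤ B ∧ ∀ x, |A x| ≤ B := by
  have hA' : Continuous (deriv A) := hA.continuous_deriv le_rfl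
  have hi1 : Integrable (fun t => |deriv A t|) := by
    refine hint.mono (hA'.abs.aestronglyMeasurable) ?_
    filter_upwards with x
    have h1 : (0:ℝ) ≤ |deriv A x| := abs_nonneg _
    have h2 : (1:ℝ) ≤ 1 + |x| := by linarith [abs_nonneg x]
    rw [Real.norm_eq_abs, Real.norm_eq_abs, abs_abs,
      abs_of_nonneg (by nlinarith : (0:ℝ) ≤ (1 + |x|) * |deriv A x|)]
    nlinarith
  set I : ℝ := ∫ t, |deriv A t| with hI
  have hdiff : ∀ y : ℝ, DifferentiableAt ℝ A y := fun y =>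
    (hA.differentiable one_ne_zero).differentiableAt
  have hstep : ∀ x : ℝ, |A x - A 0| ≤ I := by
    intro x
    rcases le_total 0 x with hx | hx
    · have hFTC : ∫ y in (0:ℝ)..x, deriv A y = A x - A 0 :=
        intervalIntegral.integral_deriv_eq_sub (fun y _ => hdiff y)
          (hA'.intervalIntegrable 0 x)
      rw [← hFTC]
      calc |∫ y in (0:ℝ)..x, deriv A y| ≤ ∫ y in (0:ℝ)..x, |deriv A y| :=
            intervalIntegral.abs_integral_le_integral_abs hx
        _ = ∫ y in Set.Ioc 0 x, |deriv A y| := intervalIntegral.integral_of_le hx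
        _ ≤ I := setIntegral_le_integral hi1
            (by filter_upwards with y; exact abs_nonneg _)
    · have hFTC : ∫ y in x..(0:ℝ), deriv A y = A 0 - A x :=
        intervalIntegral.integral_deriv_eq_sub (fun y _ => hdiff y)
          (hA'.intervalIntegrable x 0)
      rw [abs_sub_comm, ← hFTC]
      calc |∫ y in x..(0:ℝ), deriv A y| ≤ ∫ y in x..(0:ℝ), |deriv A y| :=
            intervalIntegral.abs_integral_le_integral_abs hx
        _ = ∫ y in Set.Ioc x 0, |deriv A y| := intervalIntegral.integral_of_le hx
        _ ≤ I := setIntegral_le_integral hi1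
            (by filter_upwards with y; exact abs_nonneg _)
  refine ⟨max 1 (|A 0| + I), le_max_left _ _, fun x => ?_⟩
  have := hstep x
  have h3 : |A x| ≤ |A 0| + I := by
    calc |A x| = |A 0 + (A x - A 0)| := by ring_nf
      _ ≤ |A 0| + |A x - A 0| := abs_add_le _ _
      _ ≤ |A 0| + I := by linarith
  exact le_trans h3 (le_max_right _ _)

/-- Separatrix property in Theorem 4.1: the bounded positive global solution
`r₀` of `r' = A(x)/r + 1` (the black hole horizon) separates the solutions that
tend to `+∞` from those that reach `r = 0` in finite time. -/
theorem acoustic_horizon_separatrix (A : ℝ → ℝ) (hA : ContDiff ℝ 1 A)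
    (a₀ : ℝ) (ha₀ : 0 < a₀) (hAneg : ∀ x, A x ≤ -a₀)
    (hint : Integrable (fun t => (1 + |t|) * |deriv A t|))
    (r₀ : ℝ → ℝ) (hr₀pos : ∀ x, 0 < r₀ x) (hr₀bdd : ∃ M, ∀ x, r₀ x ≤ M)
    (hr₀ode : ∀ x, HasDerivAt r₀ (A x / r₀ x + 1) x) :
    (∀ t : ℝ, ∀ r : ℝ → ℝ,
      (∀ x ∈ Set.Ici t, HasDerivWithinAt r (A x / r x + 1) (Set.Ici t) x) →
      r₀ t < r t →
      (∀ x ∈ Set.Ici t, 0 < r x) ∧ Tendsto r atTop atTop) ∧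
    (∀ t : ℝ, ∀ r : ℝ → ℝ,
      (∀ x ∈ Set.Ici t, HasDerivWithinAt r (A x / r x + 1) (Set.Ici t) x) →
      0 < r t → r t < r₀ t →
      ¬ (∀ x ∈ Set.Ici t, 0 < r x) ∧
      ∃ x₁ > t, Tendsto r (nhdsWithin x₁ (Set.Iio x₁)) (nhds 0)) := by
  obtain ⟨M, hM⟩ := hr₀bdd
  have hM0 : 0 < M := lt_of_lt_of_le (hr₀pos 0) (hM 0)
  obtain ⟨B, hB1, hB⟩ := bound_of_integrable_deriv hA hint
  have hB0 : 0 < B := lt_of_lt_of_le one_pos hB1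
  have hAB : ∀ x, -B ≤ A x := fun x => neg_le_of_abs_le (hB x)
  have hAneg' : ∀ x, A x < 0 := fun x => lt_of_le_of_lt (hAneg x) (by linarith)
  constructor
  · -- Part (i)
    intro t r hr hinit
    set c : ℝ := (r t - r₀ t) / 2 with hc
    have hc0 : 0 < c := by simp only [hc]; linarith
    -- derivative of u = r - r₀
    have huder : ∀ x ∈ Set.Ici t,
        HasDerivWithinAt (fun y => r y - r₀ y)
          ((A x / r x + 1) - (A x / r₀ x + 1)) (Set.Ici t) x :=
      fun x hx => (hr x hx).sub ((hr₀ode x).hasDerivWithinAt)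
    have hu : ∀ x ∈ Set.Ici t, c < r x - r₀ x := by
      refine fence_lemma huder (by simp only [hc]; linarith) ?_
      intro x hx hcontact
      have hrx : r x = r₀ x + c := by linarith [hcontact]
      have hrxpos : 0 < r x := by rw [hrx]; linarith [hr₀pos x]
      have hne1 : r x ≠ 0 := ne_of_gt hrxpos
      have hne2 : r₀ x ≠ 0 := ne_of_gt (hr₀pos x)
      have hform : (A x / r x + 1) - (A x / r₀ x + 1)
          = (-A x) * (r x - r₀ x) / (r x * r₀ x) := by
        field_simp
        ring
      rw [hform, hcontact]
      exact div_pos (mul_pos (by linarith [hAneg x]) hc0)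
        (mul_pos hrxpos (hr₀pos x))
    have hrpos : ∀ x ∈ Set.Ici t, 0 < r x := by
      intro x hx
      have := hu x hx
      linarith [hr₀pos x]
    refine ⟨hrpos, ?_⟩
    -- Step: find x₁ with r x₁ > 2B
    have hx₁ : ∃ x₁ ∈ Set.Ici t, 2 * B < r x₁ := by
      by_contra hK
      push_neg at hK
      set K : ℝ := 2 * B with hKdef
      have hK0 : 0 < K := by positivity
      set ε : ℝ := a₀ * c / (K * M) with hε
      have hε0 : 0 < ε := by positivity
      have hbelow : ∀ x ∈ Set.Ici t, ε ≤ (A x / r x + 1) - (A x / r₀ x + 1) := by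
        intro x hx
        have hrx : 0 < r x := hrpos x hx
        have hux : c < r x - r₀ x := hu x hx
        have hne1 : r x ≠ 0 := ne_of_gt hrx
        have hne2 : r₀ x ≠ 0 := ne_of_gt (hr₀pos x)
        have hform : (A x / r x + 1) - (A x / r₀ x + 1)
            = (-A x) * (r x - r₀ x) / (r x * r₀ x) := by
          field_simp
          ring
        rw [hform]
        refine div_le_div₀ (by nlinarith [hAneg x]) (by nlinarith [hAneg x])
          (mul_pos hrx (hr₀pos x)) ?_
        have := hK x hx
        have := hM x
        nlinarith [hr₀pos x]
      have hgr := growth_lemma huder hbelow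
      set x : ℝ := t + (K + 1 - (r t - r₀ t)) / ε with hxdef
      have hd0 : 0 < K + 1 - (r t - r₀ t) := by
        have := hK t Set.self_mem_Ici
        nlinarith [hr₀pos t]
      have hxt : x ∈ Set.Ici t := by
        simp only [hxdef, Set.mem_Ici]
        nlinarith [div_pos hd0 hε0]
      have := hgr x hxt
      have hεne : ε ≠ 0 := ne_of_gt hε0
      have hcalc : ε * (x - t) = K + 1 - (r t - r₀ t) := by
        simp only [hxdef]
        field_simp
        ring
      rw [hcalc] at this
      have h1 := hK x hxt
      have h2 := hr₀pos x
      linarith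
    obtain ⟨x₁, hx₁t, hrx₁⟩ := hx₁
    -- on Ici x₁, r stays above 2B
    have hrsub : ∀ x ∈ Set.Ici x₁, HasDerivWithinAt r (A x / r x + 1) (Set.Ici x₁) x :=
      fun x hx => (hr x (Set.mem_Ici.2 (le_trans hx₁t hx))).mono (Set.Ici_subset_Ici.2 hx₁t)
    have hfence2 : ∀ x ∈ Set.Ici x₁, 2 * B < r x := by
      refine fence_lemma hrsub hrx₁ ?_
      intro x hx hcontact
      rw [hcontact]
      have h2 : -B / (2 * B) ≤ A x / (2 * B) :=
        (div_le_div_iff_of_pos_right (by positivity)).2 (hAB x)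
      have h1 : -B / (2 * B) = -(1/2 : ℝ) := by
        rw [div_eq_iff (by positivity : (2:ℝ) * B ≠ 0)]
        ring
      rw [h1] at h2
      linarith
    have hhalf : ∀ x ∈ Set.Ici x₁, (1/2 : ℝ) ≤ A x / r x + 1 := by
      intro x hx
      have hrx : 2 * B < r x := hfence2 x hx
      have hrx0 : 0 < r x := by linarith
      have h1 : -B / r x ≤ A x / r x := (div_le_div_iff_of_pos_right hrx0).2 (hAB x)
      have h2 : -(1/2 : ℝ) ≤ -B / r x := by
        rw [neg_div, neg_le_neg_iff, div_le_iff₀ hrx0]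
        linarith
      linarith
    have hgr2 := growth_lemma hrsub hhalf
    have h1 : Tendsto (fun x : ℝ => x - x₁) atTop atTop :=
      tendsto_atTop_add_const_right atTop (-x₁) tendsto_id
    have h2 : Tendsto (fun x : ℝ => (1/2 : ℝ) * (x - x₁)) atTop atTop :=
      Tendsto.const_mul_atTop (by norm_num) h1
    have h3 : Tendsto (fun x : ℝ => r x₁ + (1/2 : ℝ) * (x - x₁)) atTop atTop :=
      tendsto_atTop_add_const_left atTop (r x₁) h2
    refine tendsto_atTop_mono' atTop ?_ h3
    filter_upwards [eventually_ge_atTop x₁] with x hx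
    exact hgr2 x hx
  · -- Part (ii)
    intro t r hr hrt0 hinit
    set c : ℝ := (r₀ t - r t) / 2 with hc
    have hc0 : 0 < c := by simp only [hc]; linarith
    have huder : ∀ x ∈ Set.Ici t,
        HasDerivWithinAt (fun y => r₀ y - r y)
          ((A x / r₀ x + 1) - (A x / r x + 1)) (Set.Ici t) x :=
      fun x hx => ((hr₀ode x).hasDerivWithinAt).sub (hr x hx)
    have hnotpos : ¬ (∀ x ∈ Set.Ici t, 0 < r x) := by
      intro hpos
      have hu : ∀ x ∈ Set.Ici t, c < r₀ x - r x := by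
        refine fence_lemma huder (by simp only [hc]; linarith) ?_
        intro x hx hcontact
        have hrx : 0 < r x := hpos x hx
        have hne1 : r x ≠ 0 := ne_of_gt hrx
        have hne2 : r₀ x ≠ 0 := ne_of_gt (hr₀pos x)
        have hform : (A x / r₀ x + 1) - (A x / r x + 1)
            = (-A x) * (r₀ x - r x) / (r x * r₀ x) := by
          field_simp
          ring
        rw [hform, hcontact]
        exact div_pos (mul_pos (by linarith [hAneg x]) hc0)
          (mul_pos hrx (hr₀pos x))
      set ε : ℝ := a₀ * c / (M * M) with hε
      have hε0 : 0 < ε := by positivity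
      have hbelow : ∀ x ∈ Set.Ici t, ε ≤ (A x / r₀ x + 1) - (A x / r x + 1) := by
        intro x hx
        have hrx : 0 < r x := hpos x hx
        have hux : c < r₀ x - r x := hu x hx
        have hne1 : r x ≠ 0 := ne_of_gt hrx
        have hne2 : r₀ x ≠ 0 := ne_of_gt (hr₀pos x)
        have hform : (A x / r₀ x + 1) - (A x / r x + 1)
            = (-A x) * (r₀ x - r x) / (r x * r₀ x) := by
          field_simp
          ring
        rw [hform]
        refine div_le_div₀ (by nlinarith [hAneg x]) (by nlinarith [hAneg x])
          (mul_pos hrx (hr₀pos x)) ?_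
        have h1 := hM x
        nlinarith [hr₀pos x]
      have hgr := growth_lemma huder hbelow
      set x : ℝ := t + (M + 1 - (r₀ t - r t)) / ε with hxdef
      have hd0 : 0 < M + 1 - (r₀ t - r t) := by
        have := hM t
        nlinarith
      have hxt : x ∈ Set.Ici t := by
        simp only [hxdef, Set.mem_Ici]
        nlinarith [div_pos hd0 hε0]
      have := hgr x hxt
      have hεne : ε ≠ 0 := ne_of_gt hε0
      have hcalc : ε * (x - t) = M + 1 - (r₀ t - r t) := by
        simp only [hxdef]
        field_simp
        ring
      rw [hcalc] at this
      have h1 := hM x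
      have h2 := hpos x hxt
      linarith
    refine ⟨hnotpos, ?_⟩
    push_neg at hnotpos
    obtain ⟨b, hb, hfb⟩ := hnotpos
    have hcont : ContinuousOn r (Set.Ici t) := fun x hx => (hr x hx).continuousWithinAt
    set S : Set ℝ := Set.Ici t ∩ r ⁻¹' Set.Iic 0 with hSdef
    have hSc : IsClosed S := hcont.preimage_isClosed_of_isClosed isClosed_Ici isClosed_Iic
    have hne : S.Nonempty := ⟨b, hb, hfb⟩
    have hbdd : BddBelow S := ⟨t, fun x hx => hx.1⟩
    set x₁ := sInf S with hx₁def
    have hx₁S : x₁ ∈ S := hSc.csInf_mem hne hbdd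
    have hx₁t : t ≤ x₁ := hx₁S.1
    have hlt : ∀ x, t ≤ x → x < x₁ → 0 < r x := by
      intro x hx hxs
      by_contra hx2; push_neg at hx2
      exact absurd (csInf_le hbdd ⟨hx, hx2⟩) (not_le.2 hxs)
    have htx₁ : t < x₁ := by
      rcases eq_or_lt_of_le hx₁t with h | h
      · exact absurd hx₁S.2 (not_le.2 (h ▸ hrt0))
      · exact h
    have hr₁_ge : 0 ≤ r x₁ := by
      have htend : Tendsto r (nhdsWithin x₁ (Set.Ioo t x₁)) (nhds (r x₁)) :=
        ((hcont x₁ hx₁S.1).tendsto).mono_left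
          (nhdsWithin_mono x₁ (fun x hx => le_of_lt hx.1))
      have hne' : (nhdsWithin x₁ (Set.Ioo t x₁)).NeBot := by
        rw [nhdsWithin_Ioo_eq_nhdsLT htx₁]; infer_instance
      refine ge_of_tendsto htend ?_
      filter_upwards [self_mem_nhdsWithin] with x hx
      exact le_of_lt (hlt x (le_of_lt hx.1) hx.2)
    have hrx₁ : r x₁ = 0 := le_antisymm hx₁S.2 hr₁_ge
    refine ⟨x₁, htx₁, ?_⟩
    have htend : Tendsto r (nhdsWithin x₁ (Set.Ici t)) (nhds (r x₁)) :=
      (hcont x₁ hx₁S.1).tendsto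
    rw [hrx₁] at htend
    have heq : nhdsWithin x₁ (Set.Iio x₁) = nhdsWithin x₁ (Set.Ioo t x₁) :=
      (nhdsWithin_Ioo_eq_nhdsLT htx₁).symm
    rw [heq]
    exact htend.mono_left (nhdsWithin_mono x₁ (fun x hx => le_of_lt hx.1))
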